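/- In the planted clique model with parameters n, k, Q (n ≥ 2, 1 ≤ k ≤ n−2), consider the modified graph G' obtained by deleting every edge with exactly one endpoint in Q (a monotone modification: no deleted edge lies inside Q, and Q remains a clique in G'). If k − 1 < (n−k−1)/2 − √(n·ln n), then with probability at least 1 − 1/n, every vertex u ∉ Q has G'-degree strictly greater than the G'-degree of every vertex v ∈ Q (each of which equals k−1). In particular, on this event the k highest-degree vertices of G' contain no vertex of Q, so a monotone adversary foils the top-k-degrees algorithm. -/

import Mathlib

open MeasureTheory

namespace Stmt6

noncomputable section
open scoped Classical

variable {n : ℕ}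

/-- Both endpoints of the unordered pair `p` lie in `Q`. -/
def BothInQ (Q : Finset (Fin n)) (p : Sym2 (Fin n)) : Prop := ∀ x ∈ p, x ∈ Q

/-- Index type: unordered pairs of distinct vertices not both lying in `Q`
(the "remaining pairs", whose edge-status is random). -/
def FreePair (n : ℕ) (Q : Finset (Fin n)) : Type :=
  {p : Sym2 (Fin n) // ¬ p.IsDiag ∧ ¬ BothInQ Q p}

instance (n : ℕ) (Q : Finset (Fin n)) : Fintype (FreePair n Q) := by
  unfold FreePair; infer_instance

/-- Sample space of the planted clique model: one Boolean for each free pair. -/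
def Ω (n : ℕ) (Q : Finset (Fin n)) : Type := FreePair n Q → Bool

instance (n : ℕ) (Q : Finset (Fin n)) : MeasurableSpace (Ω n Q) := MeasurableSpace.pi

/-- The Bernoulli(1/2) measure on `Bool`. -/
def bernoulliHalf : Measure Bool := (PMF.bernoulli (1 / 2) (by norm_num)).toMeasure

instance : IsProbabilityMeasure bernoulliHalf := PMF.toMeasure.isProbabilityMeasure _

/-- The planted clique measure: each remaining pair is an edge independently w.p. 1/2. -/
def plantedClique (n : ℕ) (Q : Finset (Fin n)) : Measure (Ω n Q) :=
  Measure.pi fun _ => bernoulliHalf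

/-- `u` and `v` are adjacent in the planted clique graph: they are distinct, and
either both lie in `Q` (a planted clique edge) or else the coin of the pair `{u,v}`
came up `true`. -/
def Adj (Q : Finset (Fin n)) (ω : Ω n Q) (u v : Fin n) : Prop :=
  ∃ hne : u ≠ v,
    BothInQ Q s(u, v) ∨
      ∃ h : ¬ BothInQ Q s(u, v),
        ω ⟨s(u, v), ⟨fun hd => hne (Sym2.mk_isDiag_iff.mp hd), h⟩⟩ = true

/-- Degree of vertex `v` in the planted clique graph: its number of neighbors. -/
def deg (Q : Finset (Fin n)) (ω : Ω n Q) (v : Fin n) : ℕ :=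
  (Finset.univ.filter fun u : Fin n => Adj Q ω u v).card

end

noncomputable section
open scoped Classical

variable {n : ℕ}

/-- Adjacency in the modified graph `G'` produced by the monotone adversary, which
deletes every edge with exactly one endpoint in `Q`: the surviving edges are those
of the planted clique graph with both endpoints in `Q` (always present) or with
both endpoints outside `Q` (present iff the coin of the pair came up `true`). -/
def Adj' (Q : Finset (Fin n)) (ω : Ω n Q) (u v : Fin n) : Prop :=
  ∃ hne : u ≠ v,
    BothInQ Q s(u, v) ∨
      ((u ∉ Q ∧ v ∉ Q) ∧
        ∃ h : ¬ BothInQ Q s(u, v),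
          ω ⟨s(u, v), ⟨fun hd => hne (Sym2.mk_isDiag_iff.mp hd), h⟩⟩ = true)

/-- Degree of vertex `v` in the modified graph `G'`. -/
def deg' (Q : Finset (Fin n)) (ω : Ω n Q) (v : Fin n) : ℕ :=
  (Finset.univ.filter fun u : Fin n => Adj' Q ω u v).card

end

noncomputable section
open scoped Classical

-- ### new material

instance (n : ℕ) (Q : Finset (Fin n)) : Fintype (Ω n Q) := by unfold Ω; infer_instance

instance (n : ℕ) (Q : Finset (Fin n)) : IsProbabilityMeasure (plantedClique n Q) := by
  unfold plantedClique; exact MeasureTheory.Measure.pi.instIsProbabilityMeasure _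

lemma measurableSet_all {Q : Finset (Fin n)} (s : Set (Ω n Q)) : MeasurableSet s := by
  have : MeasurableSingletonClass (Ω n Q) :=
    (inferInstance : MeasurableSingletonClass (FreePair n Q → Bool))
  exact (Set.toFinite s).measurableSet

lemma bern_single (b : Bool) : bernoulliHalf {b} = 1/2 := by
  rw [bernoulliHalf, PMF.toMeasure_apply_singleton _ _ (measurableSet_singleton b)]
  cases b
  · simp [PMF.bernoulli_apply, ENNReal.one_sub_inv_two, one_div]
  · simp [PMF.bernoulli_apply, one_div]

/-- `v ∈ Q` has `deg'` equal to `Q.card - 1`. -/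
lemma deg'_of_mem {Q : Finset (Fin n)} (ω : Ω n Q) {v : Fin n} (hv : v ∈ Q) :
    deg' Q ω v = Q.card - 1 := by
  have h : (Finset.univ.filter fun u : Fin n => Adj' Q ω u v) = Q.erase v := by
    ext u
    simp only [Finset.mem_filter, Finset.mem_univ, true_and, Finset.mem_erase]
    constructor
    · rintro ⟨hne, h | ⟨⟨-, hvQ⟩, -⟩⟩
      · exact ⟨hne, h u (Sym2.mem_mk_left u v)⟩
      · exact absurd hv hvQ
    · rintro ⟨hne, huQ⟩
      refine ⟨hne, Or.inl ?_⟩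
      intro x hx
      rcases Sym2.mem_iff.mp hx with rfl | rfl
      · exact huQ
      · exact hv
  rw [deg', h, Finset.card_erase_of_mem hv]

/-- The free pair `{w, u}` for `u ∉ Q`, `w ≠ u`. -/
def pairIdx (Q : Finset (Fin n)) (u : Fin n) (hu : u ∉ Q) (w : Fin n) (hw : w ≠ u) :
    FreePair n Q :=
  ⟨s(w, u), ⟨fun hd => hw (Sym2.mk_isDiag_iff.mp hd),
    fun hb => hu (hb u (Sym2.mem_mk_right w u))⟩⟩

lemma adj'_iff {Q : Finset (Fin n)} (ω : Ω n Q) {u : Fin n} (hu : u ∉ Q) (w : Fin n) :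
    Adj' Q ω w u ↔ ∃ (hw : w ≠ u), w ∉ Q ∧ ω (pairIdx Q u hu w hw) = true := by
  constructor
  · rintro ⟨hne, h | ⟨⟨hwQ, -⟩, ⟨h, hω⟩⟩⟩
    · exact absurd (h u (Sym2.mem_mk_right w u)) hu
    · refine ⟨hne, hwQ, ?_⟩
      rw [← hω]
      congr 1
  · rintro ⟨hw, hwQ, hω⟩
    refine ⟨hw, Or.inr ⟨⟨hwQ, hu⟩, ⟨fun hb => hu (hb u (Sym2.mem_mk_right w u)), ?_⟩⟩⟩
    rw [← hω]
    congr 1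

/-- Vertices available as random neighbours of `u`. -/
def Out (Q : Finset (Fin n)) (u : Fin n) : Type := {w : Fin n // w ∉ Q ∧ w ≠ u}

instance {Q : Finset (Fin n)} (u : Fin n) : Fintype (Out Q u) := by
  unfold Out; infer_instance

def epsMap (Q : Finset (Fin n)) {u : Fin n} (hu : u ∉ Q) (w : Out Q u) : FreePair n Q :=
  pairIdx Q u hu w.1 w.2.2

lemma epsMap_inj {Q : Finset (Fin n)} {u : Fin n} (hu : u ∉ Q) :
    Function.Injective (epsMap Q hu) := by
  rintro ⟨w, hw⟩ ⟨w', hw'⟩ h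
  have h1 : s(w, u) = s(w', u) := congrArg Subtype.val h
  rcases Sym2.eq_iff.mp h1 with ⟨rfl, -⟩ | ⟨rfl, rfl⟩
  · rfl
  · exact absurd rfl hw'.2

lemma card_Out {Q : Finset (Fin n)} {u : Fin n} (hu : u ∉ Q) :
    Fintype.card (Out Q u) = n - Q.card - 1 := by
  rw [show Fintype.card (Out Q u) = (Finset.univ.filter fun w : Fin n => w ∉ Q ∧ w ≠ u).card
    from Fintype.card_subtype _]
  have h : (Finset.univ.filter fun w : Fin n => w ∉ Q ∧ w ≠ u) = (Qᶜ).erase u := by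
    ext w
    simp [Finset.mem_erase, and_comm]
  rw [h, Finset.card_erase_of_mem (by simpa using hu), Finset.card_compl, Fintype.card_fin]

lemma deg'_of_not_mem {Q : Finset (Fin n)} (ω : Ω n Q) {u : Fin n} (hu : u ∉ Q) :
    deg' Q ω u = (Finset.univ.filter fun w : Out Q u => ω (epsMap Q hu w) = true).card := by
  rw [deg']
  symm
  apply Finset.card_bij (fun (w : Out Q u) _ => w.1)
  · rintro ⟨w, hwQ, hwu⟩ ha
    simp only [Finset.mem_filter, Finset.mem_univ, true_and] at ha ⊢
    exact (adj'_iff ω hu w).mpr ⟨hwu, hwQ, (Finset.mem_filter.mp ha).2⟩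
  · intro a _ b _ h
    exact Subtype.ext h
  · intro b hb
    simp only [Finset.mem_filter, Finset.mem_univ, true_and] at hb
    obtain ⟨hne, hwQ, coin⟩ := (adj'_iff ω hu b).mp hb
    refine ⟨⟨b, hwQ, hne⟩, ?_, rfl⟩
    exact Finset.mem_filter.mpr ⟨Finset.mem_univ _, coin⟩

lemma cylinder_bound {Q : Finset (Fin n)} {ι : Type} [Fintype ι]
    {ε : ι → FreePair n Q} (hε : Function.Injective ε) (F : Finset ι) :
    plantedClique n Q {ω | ∀ w : ι, (ω (ε w) = true ↔ w ∈ F)} ≤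
      (1/2 : ENNReal) ^ Fintype.card ι := by
  set g : FreePair n Q → Set Bool := fun i => {b | ∀ w, ε w = i → (b = true ↔ w ∈ F)} with hg
  have hsub : {ω : Ω n Q | ∀ w : ι, (ω (ε w) = true ↔ w ∈ F)} ⊆ Set.pi Set.univ g := by
    intro ω hω i _
    intro w hwi
    rw [← hwi]
    exact hω w
  have hpi : plantedClique n Q (Set.pi Set.univ g) = ∏ i, bernoulliHalf (g i) := by
    rw [plantedClique]
    exact MeasureTheory.Measure.pi_pi _ _
  have hfac : ∀ i, bernoulliHalf (g i) ≤
      (if i ∈ Finset.univ.image ε then (1/2 : ENNReal) else 1) := by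
    intro i
    split_ifs with hi
    · obtain ⟨w, -, rfl⟩ := Finset.mem_image.mp hi
      by_cases hwF : w ∈ F
      · have : g (ε w) ⊆ {true} := by
          intro b hb
          have := (hb w rfl).mpr hwF
          simp [this]
        calc bernoulliHalf (g (ε w)) ≤ bernoulliHalf {true} := measure_mono this
          _ = 1/2 := bern_single true
      · have : g (ε w) ⊆ {false} := by
          intro b hb
          have hb' := hb w rfl
          cases b
          · simp
          · simp at hb'; exact absurd hb' hwF
        calc bernoulliHalf (g (ε w)) ≤ bernoulliHalf {false} := measure_mono this
          _ = 1/2 := bern_single false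
    · exact prob_le_one
  calc plantedClique n Q {ω : Ω n Q | ∀ w : ι, (ω (ε w) = true ↔ w ∈ F)}
      ≤ plantedClique n Q (Set.pi Set.univ g) := measure_mono hsub
    _ = ∏ i, bernoulliHalf (g i) := hpi
    _ ≤ ∏ i, (if i ∈ Finset.univ.image ε then (1/2 : ENNReal) else 1) :=
        Finset.prod_le_prod' fun i _ => hfac i
    _ = (1/2 : ENNReal) ^ Fintype.card ι := by
        rw [Finset.prod_ite_mem, Finset.univ_inter, Finset.prod_const,
          Finset.card_image_of_injective _ hε, Finset.card_univ]

lemma count_small (ι : Type) [Fintype ι] (t : ℕ) :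
    (Finset.univ.filter fun F : Finset ι => F.card ≤ t).card =
      ∑ j ∈ Finset.range (t+1), (Fintype.card ι).choose j := by
  have h : (Finset.univ.filter fun F : Finset ι => F.card ≤ t) =
      (Finset.range (t+1)).biUnion fun j => Finset.powersetCard j Finset.univ := by
    ext F
    simp only [Finset.mem_filter, Finset.mem_univ, true_and, Finset.mem_biUnion,
      Finset.mem_range, Finset.mem_powersetCard, Nat.lt_succ_iff]
    constructor
    · intro h; exact ⟨F.card, h, Finset.subset_univ F, rfl⟩
    · rintro ⟨j, hj, -, rfl⟩; exact hj
  rw [h, Finset.card_biUnion]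
  · apply Finset.sum_congr rfl
    intro j _
    rw [Finset.card_powersetCard, Finset.card_univ]
  · intro a _ b _ hab
    simp only [Finset.disjoint_left, Finset.mem_powersetCard]
    rintro F ⟨-, rfl⟩ ⟨-, h2⟩
    exact hab h2

lemma tail_bound {Q : Finset (Fin n)} {ι : Type} [Fintype ι]
    {ε : ι → FreePair n Q} (hε : Function.Injective ε) (t : ℕ) :
    plantedClique n Q {ω | (Finset.univ.filter fun w : ι => ω (ε w) = true).card ≤ t} ≤
      (((∑ j ∈ Finset.range (t+1), (Fintype.card ι).choose j : ℕ)) : ENNReal) *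
        (1/2 : ENNReal) ^ Fintype.card ι := by
  set 𝒮 : Finset (Finset ι) := Finset.univ.filter fun F => F.card ≤ t with h𝒮
  have hsub : {ω : Ω n Q | (Finset.univ.filter fun w : ι => ω (ε w) = true).card ≤ t} ⊆
      ⋃ F ∈ 𝒮, {ω : Ω n Q | ∀ w : ι, (ω (ε w) = true ↔ w ∈ F)} := by
    intro ω hω
    rw [Set.mem_iUnion₂]
    refine ⟨Finset.univ.filter fun w : ι => ω (ε w) = true, ?_, ?_⟩
    · simp only [h𝒮, Finset.mem_filter, Finset.mem_univ, true_and]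
      exact hω
    · intro w
      simp
  calc plantedClique n Q {ω : Ω n Q | (Finset.univ.filter fun w : ι => ω (ε w) = true).card ≤ t}
      ≤ plantedClique n Q (⋃ F ∈ 𝒮, {ω : Ω n Q | ∀ w : ι, (ω (ε w) = true ↔ w ∈ F)}) :=
        measure_mono hsub
    _ ≤ ∑ F ∈ 𝒮, plantedClique n Q {ω : Ω n Q | ∀ w : ι, (ω (ε w) = true ↔ w ∈ F)} :=
        measure_biUnion_finset_le _ _
    _ ≤ ∑ F ∈ 𝒮, (1/2 : ENNReal) ^ Fintype.card ι :=
        Finset.sum_le_sum fun F _ => cylinder_bound hε F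
    _ = (𝒮.card : ENNReal) * (1/2 : ENNReal) ^ Fintype.card ι := by
        rw [Finset.sum_const, nsmul_eq_mul]
    _ = _ := by rw [h𝒮, count_small]

open Finset in

lemma chernoff (m t : ℕ) (hm : 1 ≤ m) (hd : (t:ℝ) ≤ m/2) :
    (∑ j ∈ Finset.range (t+1), (Nat.choose m j : ℝ)) * (1/2)^m ≤
      Real.exp (-2*((m:ℝ)/2 - t)^2/m) := by
  have hm0 : (0:ℝ) < m := by exact_mod_cast hm
  set δ : ℝ := (m:ℝ)/2 - t with hδdef
  have hδ0 : 0 ≤ δ := by simp only [hδdef]; linarith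
  set s : ℝ := 4*δ/m with hsdef
  have hs0 : 0 ≤ s := by positivity
  have htm : t ≤ m := by
    have h1 : (t:ℝ) ≤ m := by linarith
    exact_mod_cast h1
  have key1 : (∑ j ∈ range (t+1), (Nat.choose m j : ℝ)) ≤
      ∑ j ∈ range (t+1), (Nat.choose m j : ℝ) * Real.exp (s*((t:ℝ)-j)) := by
    apply Finset.sum_le_sum
    intro j hj
    have hjt' : j ≤ t := Nat.lt_succ_iff.mp (Finset.mem_range.mp hj)
    have hjt : (j:ℝ) ≤ t := by exact_mod_cast hjt'
    have h1 : (1:ℝ) ≤ Real.exp (s*((t:ℝ)-j)) := Real.one_le_exp (by nlinarith)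
    have hc : (0:ℝ) ≤ (Nat.choose m j : ℝ) := Nat.cast_nonneg _
    nlinarith
  have key2 : (∑ j ∈ range (t+1), (Nat.choose m j : ℝ) * Real.exp (s*((t:ℝ)-j))) ≤
      ∑ j ∈ range (m+1), (Nat.choose m j : ℝ) * Real.exp (s*((t:ℝ)-j)) := by
    apply Finset.sum_le_sum_of_subset_of_nonneg
    · exact Finset.range_subset_range.mpr (by omega)
    · intro j _ _; positivity
  have hterm : ∀ j : ℕ, Real.exp (s*((t:ℝ)-j)) = Real.exp (s*t) * Real.exp (-s)^j := by
    intro j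
    rw [← Real.exp_nat_mul, ← Real.exp_add]
    congr 1
    ring
  have key3 : (∑ j ∈ range (m+1), (Nat.choose m j : ℝ) * Real.exp (s*((t:ℝ)-j))) =
      Real.exp (s*t) * (Real.exp (-s) + 1)^m := by
    rw [add_pow, Finset.mul_sum]
    apply Finset.sum_congr rfl
    intro j hj
    rw [hterm j, one_pow]
    ring
  have hcosh : (Real.exp (-s) + 1)/2 ≤ Real.exp (-s/2 + s^2/8) := by
    have h1 : Real.exp (-s/2) * Real.cosh (s/2) = (Real.exp (-s) + 1)/2 := by
      rw [Real.cosh_eq, ← mul_div_assoc, mul_add, ← Real.exp_add, ← Real.exp_add,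
        show -s/2 + s/2 = 0 by ring, show -s/2 + -(s/2) = -s by ring, Real.exp_zero, add_comm]
    have h2 : Real.cosh (s/2) ≤ Real.exp ((s/2)^2/2) := Real.cosh_le_exp_half_sq _
    calc (Real.exp (-s) + 1)/2 = Real.exp (-s/2) * Real.cosh (s/2) := h1.symm
      _ ≤ Real.exp (-s/2) * Real.exp ((s/2)^2/2) :=
          mul_le_mul_of_nonneg_left h2 (Real.exp_nonneg _)
      _ = Real.exp (-s/2 + s^2/8) := by rw [← Real.exp_add]; ring_nf
  have hpow : ((Real.exp (-s) + 1)/2)^m ≤ Real.exp ((m:ℝ) * (-s/2 + s^2/8)) := by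
    rw [Real.exp_nat_mul]
    exact pow_le_pow_left₀ (by positivity) hcosh m
  have harith : s*t + (m:ℝ) * (-s/2 + s^2/8) = -2*δ^2/m := by
    have ht' : (t:ℝ) = (m:ℝ)/2 - δ := by rw [hδdef]; ring
    rw [hsdef, ht']
    field_simp
    ring
  calc (∑ j ∈ range (t+1), (Nat.choose m j : ℝ)) * (1/2)^m
      ≤ (Real.exp (s*t) * (Real.exp (-s) + 1)^m) * (1/2)^m := by
        apply mul_le_mul_of_nonneg_right _ (by positivity)
        rw [← key3]; exact key1.trans key2
    _ = Real.exp (s*t) * ((Real.exp (-s) + 1)/2)^m := by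
        rw [mul_assoc, ← mul_pow]
        congr 2
        ring
    _ ≤ Real.exp (s*t) * Real.exp ((m:ℝ) * (-s/2 + s^2/8)) :=
        mul_le_mul_of_nonneg_left hpow (Real.exp_nonneg _)
    _ = Real.exp (-2*δ^2/m) := by rw [← Real.exp_add, harith]

lemma per_vertex_bound (n k : ℕ) (hn : 2 ≤ n) (hk1 : 1 ≤ k) (hkn : k ≤ n - 2)
    (Q : Finset (Fin n)) (hQ : Q.card = k)
    (hsmall : (k : ℝ) - 1 < ((n : ℝ) - k - 1) / 2 - Real.sqrt (n * Real.log n))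
    {u : Fin n} (hu : u ∉ Q) :
    plantedClique n Q {ω : Ω n Q | deg' Q ω u ≤ k - 1} ≤
      ENNReal.ofReal (1/(n:ℝ)^2) := by
  have hkn' : k + 2 ≤ n := by omega
  have hcard : Fintype.card (Out Q u) = n - k - 1 := by rw [card_Out hu, hQ]
  set m : ℕ := n - k - 1 with hmdef
  have hm : m = n - k - 1 := hmdef
  have hm1 : 1 ≤ m := by omega
  have hmn : m ≤ n := by omega
  have hm0 : (0:ℝ) < m := by exact_mod_cast hm1
  have hmr : (m:ℝ) = (n:ℝ) - k - 1 := by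
    rw [hm, show n - k - 1 = n - (k+1) by omega, Nat.cast_sub (by omega : k + 1 ≤ n)]
    push_cast; ring
  have htr : ((k - 1 : ℕ) : ℝ) = (k:ℝ) - 1 := by
    rw [Nat.cast_sub hk1]; norm_num
  have hsqrt0 : 0 ≤ Real.sqrt ((n:ℝ) * Real.log n) := Real.sqrt_nonneg _
  have hd : (((k - 1 : ℕ)) : ℝ) ≤ (m:ℝ)/2 := by rw [htr, hmr]; linarith
  -- event rewrite
  have hev : {ω : Ω n Q | deg' Q ω u ≤ k - 1} =
      {ω : Ω n Q | (Finset.univ.filter fun w : Out Q u =>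
        ω (epsMap Q hu w) = true).card ≤ k - 1} := by
    ext ω
    simp only [Set.mem_setOf_eq, deg'_of_not_mem ω hu]
  -- real-side chernoff
  have hcher := chernoff m (k-1) hm1 hd
  have hn0 : (0:ℝ) < n := by positivity
  have hn1 : (1:ℝ) ≤ n := by exact_mod_cast (by omega : 1 ≤ n)
  have hlogn : 0 ≤ Real.log n := Real.log_nonneg hn1
  set δ : ℝ := (m:ℝ)/2 - ((k-1:ℕ):ℝ) with hδdef
  have hδgt : Real.sqrt ((n:ℝ) * Real.log n) < δ := by
    rw [hδdef, htr, hmr]; linarith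
  have hδ2 : (n:ℝ) * Real.log n ≤ δ^2 := by
    have h0 : 0 ≤ (n:ℝ) * Real.log n := mul_nonneg (le_of_lt hn0) hlogn
    nlinarith [Real.sq_sqrt h0, Real.sqrt_nonneg ((n:ℝ) * Real.log n)]
  have hexp : Real.exp (-2*δ^2/m) ≤ 1/(n:ℝ)^2 := by
    have hmnr : (m:ℝ) ≤ n := by exact_mod_cast hmn
    have hlog : -2*δ^2/(m:ℝ) ≤ -2*Real.log n := by
      rw [div_le_iff₀ hm0]
      nlinarith
    calc Real.exp (-2*δ^2/m) ≤ Real.exp (-2*Real.log n) := Real.exp_le_exp.mpr hlog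
      _ = 1/(n:ℝ)^2 := by
          rw [show (-2:ℝ)*Real.log n = -(((2:ℕ):ℝ)*Real.log n) by norm_num,
            Real.exp_neg, Real.exp_nat_mul, Real.exp_log hn0]
          norm_num
  -- ENNReal transfer
  have htrans : (((∑ j ∈ Finset.range ((k-1)+1), m.choose j : ℕ)) : ENNReal) *
      (1/2 : ENNReal) ^ m = ENNReal.ofReal
        ((∑ j ∈ Finset.range ((k-1)+1), (m.choose j : ℝ)) * (1/2:ℝ)^m) := by
    rw [ENNReal.ofReal_mul (by positivity), ENNReal.ofReal_pow (by norm_num : (0:ℝ) ≤ 1/2)]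
    congr 1
    · rw [← ENNReal.ofReal_natCast]
      congr 1
      push_cast
      rfl
    · rw [ENNReal.ofReal_div_of_pos (by norm_num)]
      norm_num
  calc plantedClique n Q {ω : Ω n Q | deg' Q ω u ≤ k - 1}
      ≤ (((∑ j ∈ Finset.range ((k-1)+1), m.choose j : ℕ)) : ENNReal) *
        (1/2 : ENNReal) ^ m := by
          rw [hev]
          have h := tail_bound (epsMap_inj hu) (k-1)
          rwa [hcard] at h
    _ = ENNReal.ofReal ((∑ j ∈ Finset.range ((k-1)+1), (m.choose j : ℝ)) * (1/2:ℝ)^m) :=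
        htrans
    _ ≤ ENNReal.ofReal (1/(n:ℝ)^2) := by
        apply ENNReal.ofReal_le_ofReal
        exact hcher.trans hexp

end

theorem monotone_adversary_foils_top_k_degrees (n k : ℕ) (hn : 2 ≤ n)
    (hk1 : 1 ≤ k) (hkn : k ≤ n - 2)
    (Q : Finset (Fin n)) (hQ : Q.card = k)
    (hsmall : (k : ℝ) - 1 < ((n : ℝ) - k - 1) / 2 - Real.sqrt (n * Real.log n)) :
    1 - ENNReal.ofReal (1 / n) ≤
      plantedClique n Q {ω : Ω n Q |
        (∀ v ∈ Q, deg' Q ω v = k - 1) ∧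
          ∀ u ∉ Q, ∀ v ∈ Q, deg' Q ω v < deg' Q ω u} := by

  classical
  set bad : Set (Ω n Q) :=
    ⋃ u ∈ Finset.univ.filter (fun u : Fin n => u ∉ Q), {ω : Ω n Q | deg' Q ω u ≤ k - 1}
    with hbaddef
  have hn0 : (0:ℝ) < n := by positivity
  have hbad : plantedClique n Q bad ≤ ENNReal.ofReal (1/(n:ℝ)) := by
    calc plantedClique n Q bad
        ≤ ∑ u ∈ Finset.univ.filter (fun u : Fin n => u ∉ Q),
            plantedClique n Q {ω : Ω n Q | deg' Q ω u ≤ k - 1} :=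
          measure_biUnion_finset_le _ _
      _ ≤ ∑ u ∈ Finset.univ.filter (fun u : Fin n => u ∉ Q),
            ENNReal.ofReal (1/(n:ℝ)^2) := by
          apply Finset.sum_le_sum
          intro u hu
          simp only [Finset.mem_filter, Finset.mem_univ, true_and] at hu
          exact per_vertex_bound n k hn hk1 hkn Q hQ hsmall hu
      _ = ((Finset.univ.filter (fun u : Fin n => u ∉ Q)).card : ENNReal) *
            ENNReal.ofReal (1/(n:ℝ)^2) := by
          rw [Finset.sum_const, nsmul_eq_mul]
      _ ≤ (n : ENNReal) * ENNReal.ofReal (1/(n:ℝ)^2) := by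
          apply mul_le_mul_left
          exact_mod_cast (Finset.card_filter_le _ _).trans (by simp)
      _ = ENNReal.ofReal ((n:ℝ) * (1/(n:ℝ)^2)) := by
          rw [ENNReal.ofReal_mul (by positivity), ENNReal.ofReal_natCast]
      _ = ENNReal.ofReal (1/(n:ℝ)) := by
          congr 1
          rw [pow_two]
          field_simp
  have hsub : badᶜ ⊆ {ω : Ω n Q |
      (∀ v ∈ Q, deg' Q ω v = k - 1) ∧
        ∀ u ∉ Q, ∀ v ∈ Q, deg' Q ω v < deg' Q ω u} := by
    intro ω hω
    simp only [hbaddef, Set.compl_iUnion, Set.mem_iInter, Set.mem_compl_iff,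
      Set.mem_setOf_eq, Finset.mem_filter, Finset.mem_univ, true_and] at hω
    constructor
    · intro v hv
      rw [deg'_of_mem ω hv, hQ]
    · intro u hu v hv
      rw [deg'_of_mem ω hv, hQ]
      exact not_le.mp (hω u hu)
  calc 1 - ENNReal.ofReal (1/(n:ℝ)) ≤ 1 - plantedClique n Q bad :=
        tsub_le_tsub_left hbad 1
    _ = plantedClique n Q badᶜ := (prob_compl_eq_one_sub (measurableSet_all _)).symm
    _ ≤ _ := measure_mono hsub

end Stmt6
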